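/- Assume the interaction graph G = (V, I) is acyclic and fix an edge {i,j} ∈ I. Then Pr(y = +1 | x_i = +1, x_j = +1) − Pr(y = −1 | x_i = +1, x_j = +1) = 2^{−(d−2)} · Σ_{x ∈ {−1,+1}^d : x_i = x_j = +1} ζ_{{i,j}}(x). -/

import Mathlib

open Finset

/-- The sigmoid function `σ(t) = eᵗ/(1+eᵗ)`. -/
noncomputable def sigmoid (t : ℝ) : ℝ := Real.exp t / (1 + Real.exp t)

/-- Interpretation of a Boolean as `±1 ∈ ℝ`. -/
def pm (b : Bool) : ℝ := if b then 1 else -1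

/-- `Σ_{{i,j}∈E} β_{{i,j}} x_i x_j`, summed over unordered pairs of distinct indices. -/
noncomputable def fld (d : ℕ) (β : Fin d → Fin d → ℝ) (x : Fin d → Bool) : ℝ :=
  ∑ i : Fin d, ∑ j ∈ Finset.Ioi i, β i j * pm (x i) * pm (x j)

/-- `Pr(y = s·(+1) | x_V ∈ A)`.  Since the covariates are i.i.d. uniform on `{−1,+1}`
and `Pr(y = s | x_V = x) = σ(s · Σ β x_i x_j)`, this conditional probability equals
`(Σ_{x∈A} σ(s · fld x)) / |A|`. -/
noncomputable def condProbY (d : ℕ) (β : Fin d → Fin d → ℝ) (s : ℝ)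
    (A : Finset (Fin d → Bool)) : ℝ :=
  (∑ x ∈ A, sigmoid (s * fld d β x)) / A.card

open scoped Classical in
/-- The influence `w_e = |2·Pr(y = +1 | x_i = +1, x_j = +1) − 1|` for `e = {i,j}`. -/
noncomputable def wgt (d : ℕ) (β : Fin d → Fin d → ℝ) (e : Sym2 (Fin d)) : ℝ :=
  |2 * condProbY d β 1 (Finset.univ.filter (fun x => ∀ v ∈ e, x v = true)) - 1|

/-- The interaction graph `G = (V, I)` with `I = {{i,j} : β_{{i,j}} ≠ 0}`. -/
def interGraph (d : ℕ) (β : Fin d → Fin d → ℝ) : SimpleGraph (Fin d) :=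
  SimpleGraph.fromRel (fun i j => β i j ≠ 0)

/-- `S_{{i,j}}(x) = Σ_{{k,l} ∈ E, {k,l} ≠ {i,j}} β_{{k,l}} x_k x_l`. -/
noncomputable def Sfun (d : ℕ) (β : Fin d → Fin d → ℝ) (i j : Fin d) (x : Fin d → Bool) : ℝ :=
  ∑ k : Fin d, ∑ l ∈ Finset.Ioi k,
    if s(k, l) = s(i, j) then 0 else β k l * pm (x k) * pm (x l)

/-- `ζ_{{i,j}}(x) = σ(β_{{i,j}} + S_{{i,j}}(x)) − σ(−β_{{i,j}} + S_{{i,j}}(x))`. -/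
noncomputable def zeta (d : ℕ) (β : Fin d → Fin d → ℝ) (i j : Fin d) (x : Fin d → Bool) : ℝ :=
  sigmoid (β i j + Sfun d β i j x) - sigmoid (-(β i j) + Sfun d β i j x)

private lemma aux_acyclic_mono {V : Type*} {G H : SimpleGraph V} (hle : G ≤ H)
    (hH : H.IsAcyclic) : G.IsAcyclic := by
  intro v c hc
  exact hH (c.mapLe hle) (hc.mapLe hle)

private lemma aux_dist_ne {V : Type*} [DecidableEq V] {G : SimpleGraph V} (hG : G.IsAcyclic)
    {r k l : V} (hadj : G.Adj k l) (hr : G.Reachable r k) : G.dist r k ≠ G.dist r l := by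
  intro heq
  obtain ⟨p, hp, hpl⟩ := hr.exists_path_of_dist
  obtain ⟨q, hq, hql⟩ := (hr.trans hadj.reachable).exists_path_of_dist
  by_cases hl : l ∈ p.support
  · have ht : (p.takeUntil l hl).IsPath := hp.takeUntil hl
    have he : (⟨p.takeUntil l hl, ht⟩ : G.Path r l) = ⟨q, hq⟩ := hG.path_unique _ _
    have hlen : (p.takeUntil l hl).length = q.length := by
      rw [show (p.takeUntil l hl) = q from congrArg Subtype.val he]
    have hspec := congrArg SimpleGraph.Walk.length (p.take_spec hl)
    rw [SimpleGraph.Walk.length_append, hlen, hql, ← heq, hpl] at hspec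
    have h0 : (p.dropUntil l hl).length = 0 := by omega
    exact hadj.ne' (SimpleGraph.Walk.eq_of_length_eq_zero h0)
  · have hcp : (p.concat hadj).IsPath := by
      rw [← SimpleGraph.Walk.isPath_reverse_iff, SimpleGraph.Walk.reverse_concat]
      refine (SimpleGraph.Walk.cons_isPath_iff _ _).2
        ⟨(SimpleGraph.Walk.isPath_reverse_iff p).2 hp, ?_⟩
      simpa [SimpleGraph.Walk.support_reverse] using hl
    have he : (⟨p.concat hadj, hcp⟩ : G.Path r l) = ⟨q, hq⟩ := hG.path_unique _ _
    have hlen : (p.concat hadj).length = q.length := by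
      rw [show (p.concat hadj) = q from congrArg Subtype.val he]
    rw [SimpleGraph.Walk.length_concat, hpl, hql, ← heq] at hlen
    omega

private lemma aux_parity {V : Type*} [DecidableEq V] {G : SimpleGraph V} (hG : G.IsAcyclic)
    {r k l : V} (hadj : G.Adj k l) (hr : G.Reachable r k) :
    (Odd (G.dist r k) ↔ ¬ Odd (G.dist r l)) := by
  have h1 : G.dist r l ≤ G.dist r k + 1 := by
    obtain ⟨p, hp, hpl⟩ := hr.exists_path_of_dist
    calc G.dist r l ≤ (p.concat hadj).length := SimpleGraph.dist_le _
    _ = G.dist r k + 1 := by rw [SimpleGraph.Walk.length_concat, hpl]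
  have h2 : G.dist r k ≤ G.dist r l + 1 := by
    obtain ⟨p, hp, hpl⟩ := (hr.trans hadj.reachable).exists_path_of_dist
    calc G.dist r k ≤ (p.concat hadj.symm).length := SimpleGraph.dist_le _
    _ = G.dist r l + 1 := by rw [SimpleGraph.Walk.length_concat, hpl]
  have h3 := aux_dist_ne hG hadj hr
  rcases Nat.lt_or_ge (G.dist r k) (G.dist r l) with h | h
  · have he : G.dist r l = G.dist r k + 1 := by omega
    rw [he, Nat.odd_add_one]
    tauto
  · have he : G.dist r k = G.dist r l + 1 := by omega
    rw [he, Nat.odd_add_one]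

set_option maxHeartbeats 1000000 in
/-- Lemma 2: if the interaction graph is acyclic and `{i,j} ∈ I`, then
`Pr(y=+1|x_i=+1,x_j=+1) − Pr(y=−1|x_i=+1,x_j=+1) = 2^{−(d−2)}·Σ_{x: x_i=x_j=+1} ζ_{{i,j}}(x)`. -/
theorem statement13 (d : ℕ) (hd : 2 ≤ d) (β : Fin d → Fin d → ℝ)
    (hsymm : ∀ i j, β i j = β j i)
    (hacyc : (interGraph d β).IsAcyclic)
    (i j : Fin d) (hij : i ≠ j) (hβ : β i j ≠ 0) :
    condProbY d β 1 (Finset.univ.filter (fun x => x i = true ∧ x j = true)) -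
      condProbY d β (-1) (Finset.univ.filter (fun x => x i = true ∧ x j = true)) =
      (2 : ℝ) ^ (2 - (d : ℤ)) *
        ∑ x ∈ Finset.univ.filter (fun x : Fin d → Bool => x i = true ∧ x j = true),
          zeta d β i j x := by
  classical
  set A : Finset (Fin d → Bool) :=
    Finset.univ.filter (fun x => x i = true ∧ x j = true) with hA
  set G : SimpleGraph (Fin d) := interGraph d β with hG
  set G' : SimpleGraph (Fin d) := G \ SimpleGraph.fromEdgeSet {s(i, j)} with hG'def
  -- basic adjacency facts
  have hGadj : ∀ {k l : Fin d}, k ≠ l → β k l ≠ 0 → G.Adj k l := by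
    intro k l hne hb
    rw [hG]
    unfold interGraph
    rw [SimpleGraph.fromRel_adj]
    exact ⟨hne, Or.inl hb⟩
  have hbridge : ¬ G'.Reachable i j := by
    have hb := SimpleGraph.isAcyclic_iff_forall_adj_isBridge.mp hacyc (hGadj hij hβ)
    rw [SimpleGraph.isBridge_iff] at hb
    exact hb
  have hG'le : G' ≤ G := sdiff_le
  have hG'acyc : G'.IsAcyclic := aux_acyclic_mono hG'le hacyc
  have hG'adj : ∀ {k l : Fin d}, k ≠ l → β k l ≠ 0 → s(k, l) ≠ s(i, j) → G'.Adj k l := by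
    intro k l hne hb hs
    rw [hG'def, SimpleGraph.sdiff_adj]
    refine ⟨hGadj hne hb, ?_⟩
    rw [SimpleGraph.fromEdgeSet_adj]
    simp [hs]
  -- the root of each connected component of `G'`
  have hne : ∀ k : Fin d, (Finset.univ.filter (fun m => G'.Reachable m k)).Nonempty :=
    fun k => ⟨k, Finset.mem_filter.2 ⟨Finset.mem_univ k, SimpleGraph.Reachable.refl k⟩⟩
  set root : Fin d → Fin d :=
    fun k => (Finset.univ.filter (fun m => G'.Reachable m k)).min' (hne k) with hroot
  have min'_congr : ∀ (s t : Finset (Fin d)) (hs : s.Nonempty) (ht : t.Nonempty),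
      s = t → s.min' hs = t.min' ht := by
    rintro s t hs ht rfl; rfl
  have hroot_reach : ∀ k : Fin d, G'.Reachable (root k) k := by
    intro k
    have := Finset.min'_mem (Finset.univ.filter (fun m => G'.Reachable m k)) (hne k)
    rw [Finset.mem_filter] at this
    exact this.2
  have hroot_eq : ∀ {k l : Fin d}, G'.Adj k l → root k = root l := by
    intro k l h
    have hset : (Finset.univ.filter (fun m => G'.Reachable m k))
        = (Finset.univ.filter (fun m => G'.Reachable m l)) := by
      ext m
      simp only [Finset.mem_filter, Finset.mem_univ, true_and]
      exact ⟨fun hm => hm.trans h.reachable, fun hm => hm.trans h.symm.reachable⟩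
    exact min'_congr _ _ (hne k) (hne l) hset
  -- the 2-coloring
  set c : Fin d → Bool := fun k =>
    if G'.Reachable i k then decide (Odd (G'.dist i k))
    else if G'.Reachable j k then decide (Odd (G'.dist j k))
    else decide (Odd (G'.dist (root k) k)) with hc
  have hci : c i = false := by
    rw [hc]
    simp only
    rw [if_pos (SimpleGraph.Reachable.refl i)]
    simp [SimpleGraph.dist_self]
  have hcj : c j = false := by
    rw [hc]
    simp only
    rw [if_neg hbridge, if_pos (SimpleGraph.Reachable.refl j)]
    simp [SimpleGraph.dist_self]
  have hcne : ∀ {k l : Fin d}, G'.Adj k l → c k ≠ c l := by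
    intro k l h
    rw [hc]
    simp only
    by_cases hik : G'.Reachable i k
    · have hil : G'.Reachable i l := hik.trans h.reachable
      rw [if_pos hik, if_pos hil]
      have hpar := aux_parity hG'acyc h hik
      simp only [ne_eq, decide_eq_decide]
      tauto
    · have hil : ¬ G'.Reachable i l := fun hl => hik (hl.trans h.symm.reachable)
      rw [if_neg hik, if_neg hil]
      by_cases hjk : G'.Reachable j k
      · have hjl : G'.Reachable j l := hjk.trans h.reachable
        rw [if_pos hjk, if_pos hjl]
        have hpar := aux_parity hG'acyc h hjk
        simp only [ne_eq, decide_eq_decide]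
        tauto
      · have hjl : ¬ G'.Reachable j l := fun hl => hjk (hl.trans h.symm.reachable)
        rw [if_neg hjk, if_neg hjl, hroot_eq h]
        have hpar := aux_parity hG'acyc h ((hroot_reach l).trans h.symm.reachable)
        simp only [ne_eq, decide_eq_decide]
        tauto
  -- pm facts
  have pm_xor : ∀ a b : Bool, pm (xor a b) = -(pm a * pm b) := by
    intro a b; cases a <;> cases b <;> norm_num [pm]
  have pm_ne : ∀ {a b : Bool}, a ≠ b → pm a * pm b = -1 := by
    intro a b hab; cases a <;> cases b <;> simp_all [pm]
  have pm_one : ∀ {a : Bool}, a = true → pm a = 1 := by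
    intro a ha; simp [pm, ha]
  -- flipping along the coloring negates S
  have hSneg : ∀ x : Fin d → Bool,
      Sfun d β i j (fun k => xor (x k) (c k)) = - Sfun d β i j x := by
    intro x
    unfold Sfun
    have hterm : ∀ k : Fin d, ∀ l ∈ Finset.Ioi k,
        (if s(k, l) = s(i, j) then (0:ℝ)
          else β k l * pm (xor (x k) (c k)) * pm (xor (x l) (c l)))
        = -(if s(k, l) = s(i, j) then (0:ℝ) else β k l * pm (x k) * pm (x l)) := by
      intro k l hl
      by_cases hs : s(k, l) = s(i, j)
      · simp [hs]
      · rw [if_neg hs, if_neg hs]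
        by_cases hb : β k l = 0
        · simp [hb]
        · have hnekl : k ≠ l := ne_of_lt (Finset.mem_Ioi.mp hl)
          have h1 := pm_ne (hcne (hG'adj hnekl hb hs))
          rw [pm_xor, pm_xor]
          linear_combination (β k l * pm (x k) * pm (x l)) * h1
    calc (∑ k : Fin d, ∑ l ∈ Finset.Ioi k,
          if s(k, l) = s(i, j) then (0:ℝ)
            else β k l * pm (xor (x k) (c k)) * pm (xor (x l) (c l)))
        = ∑ k : Fin d, ∑ l ∈ Finset.Ioi k,
            -(if s(k, l) = s(i, j) then (0:ℝ) else β k l * pm (x k) * pm (x l)) := by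
          exact Finset.sum_congr rfl fun k _ => Finset.sum_congr rfl fun l hl => hterm k l hl
      _ = -∑ k : Fin d, ∑ l ∈ Finset.Ioi k,
            (if s(k, l) = s(i, j) then (0:ℝ) else β k l * pm (x k) * pm (x l)) := by
          simp [Finset.sum_neg_distrib]
  -- decomposition of the field
  have hfld : ∀ x : Fin d → Bool,
      fld d β x = β i j * pm (x i) * pm (x j) + Sfun d β i j x := by
    intro x
    have hsplit : fld d β x = (∑ k : Fin d, ∑ l ∈ Finset.Ioi k,
        (if s(k, l) = s(i, j) then β k l * pm (x k) * pm (x l) else 0)) + Sfun d β i j x := by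
      unfold fld Sfun
      rw [← Finset.sum_add_distrib]
      refine Finset.sum_congr rfl fun k _ => ?_
      rw [← Finset.sum_add_distrib]
      refine Finset.sum_congr rfl fun l _ => ?_
      by_cases hs : s(k, l) = s(i, j) <;> simp [hs]
    rw [hsplit]
    congr 1
    have main : ∀ a b : Fin d, a < b → s(a, b) = s(i, j) →
        (∑ k : Fin d, ∑ l ∈ Finset.Ioi k,
          (if s(k, l) = s(i, j) then β k l * pm (x k) * pm (x l) else 0))
        = β a b * pm (x a) * pm (x b) := by
      intro a b hab hs
      have hout : ∀ k ∈ (Finset.univ : Finset (Fin d)), k ≠ a →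
          (∑ l ∈ Finset.Ioi k,
            (if s(k, l) = s(i, j) then β k l * pm (x k) * pm (x l) else 0)) = 0 := by
        intro k _ hka
        apply Finset.sum_eq_zero
        intro l hl
        rw [if_neg]
        intro hkl
        rw [← hs, Sym2.eq_iff] at hkl
        have hkls := Finset.mem_Ioi.mp hl
        rcases hkl with ⟨h1, _⟩ | ⟨h1, h2⟩
        · exact hka h1
        · subst h1; subst h2
          exact absurd hkls (not_lt.mpr hab.le)
      have hin : ∀ l ∈ Finset.Ioi a, l ≠ b →
          (if s(a, l) = s(i, j) then β a l * pm (x a) * pm (x l) else 0) = 0 := by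
        intro l _ hlb
        rw [if_neg]
        intro hkl
        rw [← hs, Sym2.eq_iff] at hkl
        rcases hkl with ⟨_, h2⟩ | ⟨h1, _⟩
        · exact hlb h2
        · exact absurd h1 (ne_of_lt hab)
      rw [Finset.sum_eq_single_of_mem a (Finset.mem_univ a) hout,
        Finset.sum_eq_single_of_mem b (Finset.mem_Ioi.mpr hab) hin, if_pos hs]
    rcases hij.lt_or_gt with hlt | hlt
    · exact main i j hlt rfl
    · rw [main j i hlt Sym2.eq_swap, hsymm j i]
      ring
  -- cardinality of A
  have hfilter : A = Fintype.piFinset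
      (fun k => if k = i ∨ k = j then ({true} : Finset Bool) else Finset.univ) := by
    rw [hA]
    ext x
    simp only [Finset.mem_filter, Finset.mem_univ, true_and, Fintype.mem_piFinset]
    constructor
    · rintro ⟨h1, h2⟩ k
      by_cases hk : k = i ∨ k = j
      · rw [if_pos hk]
        rcases hk with rfl | rfl <;> simp [h1, h2]
      · rw [if_neg hk]; simp
    · intro h
      constructor
      · have := h i; rw [if_pos (Or.inl rfl)] at this; simpa using this
      · have := h j; rw [if_pos (Or.inr rfl)] at this; simpa using this
  have hjmem : j ∈ Finset.univ.erase i := Finset.mem_erase.mpr ⟨Ne.symm hij, Finset.mem_univ j⟩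
  have hcard : A.card = 2 ^ (d - 2) := by
    rw [hfilter, Fintype.card_piFinset]
    have hc1 : ∀ k : Fin d,
        (if k = i ∨ k = j then ({true} : Finset Bool) else Finset.univ).card
        = if k = i ∨ k = j then 1 else 2 := by
      intro k; by_cases hk : k = i ∨ k = j <;> simp [hk]
    rw [Finset.prod_congr rfl (fun k _ => hc1 k),
      ← Finset.mul_prod_erase Finset.univ _ (Finset.mem_univ i),
      ← Finset.mul_prod_erase (Finset.univ.erase i) _ hjmem,
      if_pos (Or.inl rfl), if_pos (Or.inr rfl)]
    have h2 : ∀ k ∈ (Finset.univ.erase i).erase j, (if k = i ∨ k = j then 1 else 2) = 2 := by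
      intro k hk
      simp only [Finset.mem_erase] at hk
      rw [if_neg]
      push_neg
      exact ⟨hk.2.1, hk.1⟩
    rw [Finset.prod_congr rfl h2, Finset.prod_const]
    have hcarde : ((Finset.univ.erase i).erase j).card = d - 2 := by
      rw [Finset.card_erase_of_mem hjmem, Finset.card_erase_of_mem (Finset.mem_univ i),
        Finset.card_univ, Fintype.card_fin]
      omega
    rw [hcarde]
    ring
  -- membership facts
  have hmem : ∀ x ∈ A, x i = true ∧ x j = true := by
    intro x hx; rw [hA, Finset.mem_filter] at hx; exact hx.2
  -- rewrite the two sums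
  have e1 : ∑ x ∈ A, sigmoid (1 * fld d β x)
      = ∑ x ∈ A, sigmoid (β i j + Sfun d β i j x) := by
    refine Finset.sum_congr rfl fun x hx => ?_
    rw [one_mul, hfld x, pm_one (hmem x hx).1, pm_one (hmem x hx).2]
    congr 1
    ring
  have hτmem : ∀ x ∈ A, (fun k => xor (x k) (c k)) ∈ A := by
    intro x hx
    rw [hA, Finset.mem_filter]
    refine ⟨Finset.mem_univ _, ?_, ?_⟩
    · show xor (x i) (c i) = true
      rw [hci, Bool.xor_false]
      exact (hmem x hx).1
    · show xor (x j) (c j) = true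
      rw [hcj, Bool.xor_false]
      exact (hmem x hx).2
  have hτinv : ∀ x : Fin d → Bool, (fun k => xor ((fun k => xor (x k) (c k)) k) (c k)) = x := by
    intro x
    funext k
    simp only
    cases x k <;> cases c k <;> rfl
  have e2 : ∑ x ∈ A, sigmoid ((-1) * fld d β x)
      = ∑ x ∈ A, sigmoid (-(β i j) + Sfun d β i j x) := by
    have step1 : ∑ x ∈ A, sigmoid ((-1) * fld d β x)
        = ∑ x ∈ A, sigmoid (-(β i j) - Sfun d β i j x) := by
      refine Finset.sum_congr rfl fun x hx => ?_
      rw [hfld x, pm_one (hmem x hx).1, pm_one (hmem x hx).2]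
      congr 1
      ring
    rw [step1]
    refine Finset.sum_nbij' (fun x => fun k => xor (x k) (c k))
      (fun x => fun k => xor (x k) (c k)) hτmem hτmem
      (fun x _ => hτinv x) (fun x _ => hτinv x) ?_
    intro x hx
    rw [hSneg x, sub_eq_add_neg]
  -- final computation
  unfold condProbY
  rw [e1, e2, div_sub_div_same, ← Finset.sum_sub_distrib]
  have hz : ∑ x ∈ A, (sigmoid (β i j + Sfun d β i j x) - sigmoid (-(β i j) + Sfun d β i j x))
      = ∑ x ∈ A, zeta d β i j x := by
    unfold zeta
    rfl
  rw [hz, hcard]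
  have hpow : ((2 ^ (d - 2) : ℕ) : ℝ) = (2:ℝ) ^ (d - 2) := by push_cast; ring
  rw [hpow, div_eq_mul_inv, mul_comm]
  congr 1
  rw [← zpow_natCast (2:ℝ) (d - 2), ← zpow_neg]
  congr 1
  omega
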